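/- Let p ≥ 1 and n ≥ 0 be integers, A a p×p real matrix, Σ_w and Σ_{x₀} p×p real positive definite matrices, and D > 0. Define δ_n = λ_max(Σ_{x₀})/(n+1) and ε_n = (1/(n+1))·[ (p/2)·log( (λ_max(A·Aᵀ)·D + trace(Σ_w)) / p ) − (1/2)·log det Σ_{x₀} ]. Define F_n(D) as the infimum of (1/(n+1))·[ (1/2)·log det Σ_{x₀} − (1/2)·log det P₀ + ∑_{t=1}^{n} ( (1/2)·log det(A·P_{t−1}·Aᵀ + Σ_w) − (1/2)·log det P_t ) ] over all tuples (P₀, …, P_n) of p×p positive definite matrices satisfying P₀ ⪯ Σ_{x₀}, P_t ⪯ A·P_{t−1}·Aᵀ + Σ_w for t = 1, …, n, and trace(P_t) ≤ D for all t. Define f(D; ε_n, δ_n) as the infimum of (1/2)·log det(A·P·Aᵀ + Σ_w) − (1/2)·log det P − ε_n over all p×p positive definite matrices P satisfying P ⪯ A·P·Aᵀ + Σ_w + δ_n·I_p and trace(P) ≤ D. Then F_n(D) ≥ f(D; ε_n, δ_n). -/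

import Mathlib

open Matrix Finset

/-- The largest eigenvalue of a Hermitian real matrix. -/
noncomputable def eigMax {p : ℕ} (M : Matrix (Fin p) (Fin p) ℝ) (hM : M.IsHermitian) : ℝ :=
  ⨆ i, hM.eigenvalues i

lemma isHermitian_mul_transpose_self_real {p : ℕ} (A : Matrix (Fin p) (Fin p) ℝ) :
    (A * Aᵀ).IsHermitian := by
  rw [← conjTranspose_eq_transpose_of_trivial]
  exact isHermitian_mul_conjTranspose_self A

variable {p : ℕ}

open scoped MatrixOrder in
/-- square root of a PSD matrix (port shim) -/
noncomputable def Matrix.PosSemidef.sqrt {M : Matrix (Fin p) (Fin p) ℝ} (_h : M.PosSemidef) :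
    Matrix (Fin p) (Fin p) ℝ :=
  CFC.sqrt M

open scoped MatrixOrder in
lemma Matrix.PosSemidef.sqrt_mul_self {M : Matrix (Fin p) (Fin p) ℝ} (h : M.PosSemidef) :
    h.sqrt * h.sqrt = M :=
  CFC.sqrt_mul_sqrt_self M h.nonneg

open scoped MatrixOrder in
lemma Matrix.PosSemidef.posSemidef_sqrt {M : Matrix (Fin p) (Fin p) ℝ} (h : M.PosSemidef) :
    h.sqrt.PosSemidef :=
  (CFC.sqrt_nonneg M).posSemidef

namespace SRD

abbrev Mat (p : ℕ) := Matrix (Fin p) (Fin p) ℝ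

lemma herm_transpose_eq {M : Mat p} (h : M.IsHermitian) : Mᵀ = M := by
  rw [← conjTranspose_eq_transpose_of_trivial]; exact h

/-- trace of a hermitian matrix equals sum of eigenvalues -/
lemma trace_eq_sum_eig {M : Mat p} (hM : M.IsHermitian) :
    M.trace = ∑ i, hM.eigenvalues i := by
  rw [hM.trace_eq_sum_eigenvalues]
  simp

lemma psd_trace_nonneg {M : Mat p} (hM : M.PosSemidef) : 0 ≤ M.trace := by
  rw [trace_eq_sum_eig hM.1]
  exact Finset.sum_nonneg fun i _ => hM.eigenvalues_nonneg i

lemma trace_le_of_psd_sub {M N : Mat p} (h : (N - M).PosSemidef) : M.trace ≤ N.trace := by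
  have := psd_trace_nonneg h
  rw [Matrix.trace_sub] at this
  linarith

/-- congruence by a symmetric invertible matrix preserves PosDef -/
lemma posDef_conj {X S : Mat p} (hX : X.PosDef) (hS : S.IsHermitian) (hdet : IsUnit S.det) :
    (S * X * S).PosDef := by
  refine Matrix.PosDef.of_dotProduct_mulVec_pos ?_ ?_
  · have : (S * X * S)ᴴ = S * X * S := by
      rw [conjTranspose_mul, conjTranspose_mul, hS.eq, hX.1.eq, Matrix.mul_assoc]
    exact this
  · intro x hx
    have hSx : S *ᵥ x ≠ 0 := by
      intro h0
      apply hx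
      have : S⁻¹ *ᵥ (S *ᵥ x) = x := by
        rw [Matrix.mulVec_mulVec, Matrix.nonsing_inv_mul _ hdet, Matrix.one_mulVec]
      rw [h0, Matrix.mulVec_zero] at this
      exact this.symm
    have hv : x ᵥ* S = S *ᵥ x := by
      rw [← Matrix.vecMul_transpose, herm_transpose_eq hS]
    have key : star x ⬝ᵥ (S * X * S) *ᵥ x = star (S *ᵥ x) ⬝ᵥ X *ᵥ (S *ᵥ x) := by
      rw [star_trivial, star_trivial, ← Matrix.mulVec_mulVec, ← Matrix.mulVec_mulVec,
        Matrix.dotProduct_mulVec x S, hv]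
    rw [key]
    exact hX.dotProduct_mulVec_pos hSx

lemma posDef_of_psd_det_ne_zero {M : Mat p} (hM : M.PosSemidef) (h : M.det ≠ 0) : M.PosDef := by
  refine Matrix.PosDef.of_dotProduct_mulVec_pos hM.1 (fun x hx => ?_)
  rcases lt_or_eq_of_le (hM.dotProduct_mulVec_nonneg x) with h' | h'
  · exact h'
  · exfalso
    have h0 : M *ᵥ x = 0 := (hM.dotProduct_mulVec_zero_iff x).mp h'.symm
    have : M⁻¹ *ᵥ (M *ᵥ x) = x := by
      rw [Matrix.mulVec_mulVec, Matrix.nonsing_inv_mul _ (isUnit_iff_ne_zero.mpr h),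
        Matrix.one_mulVec]
    rw [h0, Matrix.mulVec_zero] at this
    exact hx this.symm

lemma sqrt_posDef {M : Mat p} (hM : M.PosDef) : (hM.posSemidef.sqrt).PosDef := by
  apply posDef_of_psd_det_ne_zero hM.posSemidef.posSemidef_sqrt
  intro h
  have := hM.posSemidef.sqrt_mul_self
  have hdet : M.det = 0 := by
    rw [← this, Matrix.det_mul, h, mul_zero]
  exact (ne_of_gt hM.det_pos) hdet


lemma psd_smul {M : Mat p} (hM : M.PosSemidef) {c : ℝ} (hc : 0 ≤ c) :
    (c • M).PosSemidef := by
  refine Matrix.PosSemidef.of_dotProduct_mulVec_nonneg ?_ (fun x => ?_)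
  · unfold Matrix.IsHermitian
    rw [conjTranspose_smul, hM.1.eq]
    simp
  · rw [Matrix.smul_mulVec, dotProduct_smul, smul_eq_mul]
    exact mul_nonneg hc (hM.dotProduct_mulVec_nonneg x)

lemma posDef_smul {M : Mat p} (hM : M.PosDef) {c : ℝ} (hc : 0 < c) :
    (c • M).PosDef := by
  refine Matrix.PosDef.of_dotProduct_mulVec_pos ?_ (fun x hx => ?_)
  · unfold Matrix.IsHermitian
    rw [conjTranspose_smul, hM.1.eq]
    simp
  · rw [Matrix.smul_mulVec, dotProduct_smul, smul_eq_mul]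
    exact mul_pos hc (hM.dotProduct_mulVec_pos hx)

lemma posDef_smul_one {c : ℝ} (hc : 0 < c) : ((c • 1 : Mat p)).PosDef :=
  posDef_smul Matrix.PosDef.one hc

/-- spectral bound: `M ⪯ (⨆ λᵢ) • 1` for a hermitian matrix. -/
lemma psd_eigMax_smul_sub {M : Mat p} (hM : M.IsHermitian) :
    ((⨆ i, hM.eigenvalues i) • (1 : Mat p) - M).PosSemidef := by
  rcases Nat.eq_zero_or_pos p with hp | hp
  · subst hp
    constructor
    · unfold Matrix.IsHermitian
      apply Matrix.ext
      intro i _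
      exact absurd i.2 (by omega)
    · intro x
      have : x = 0 := by ext i; exact absurd i.2 (by omega)
      simp [this]
  set c := ⨆ i, hM.eigenvalues i with hc
  have hbdd : BddAbove (Set.range hM.eigenvalues) := Set.Finite.bddAbove (Set.finite_range _)
  have hle : ∀ i, hM.eigenvalues i ≤ c := fun i => le_ciSup hbdd i
  have hU : (hM.eigenvectorUnitary : Mat p) * star (hM.eigenvectorUnitary : Mat p) = 1 :=
    (Matrix.mem_unitaryGroup_iff).mp hM.eigenvectorUnitary.2
  have key : c • (1 : Mat p) - M =
      (hM.eigenvectorUnitary : Mat p) * (Matrix.diagonal (fun i => c - hM.eigenvalues i)) *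
        star (hM.eigenvectorUnitary : Mat p) := by
    have hdiag : Matrix.diagonal (fun i => c - hM.eigenvalues i) =
        c • (1 : Mat p) - Matrix.diagonal (RCLike.ofReal ∘ hM.eigenvalues) := by
      ext i j
      rcases eq_or_ne i j with rfl | hij
      · simp [Matrix.diagonal_apply_eq, Matrix.one_apply_eq, RCLike.ofReal_real_eq_id]
      · simp [Matrix.diagonal_apply_ne _ hij, Matrix.one_apply_ne hij]
    rw [hdiag, Matrix.mul_sub, Matrix.sub_mul]
    congr 1
    · rw [Matrix.mul_smul, Matrix.smul_mul, Matrix.mul_one, hU]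
    · exact hM.spectral_theorem
  rw [key]
  apply Matrix.PosSemidef.mul_mul_conjTranspose_same
  exact Matrix.PosSemidef.diagonal (fun i => sub_nonneg.mpr (hle i))

lemma eigMax_nonneg {M : Mat p} (hp : 1 ≤ p) (hM : M.PosSemidef) :
    0 ≤ ⨆ i, hM.1.eigenvalues i := by
  have hbdd : BddAbove (Set.range hM.1.eigenvalues) := Set.Finite.bddAbove (Set.finite_range _)
  have : Nonempty (Fin p) := ⟨⟨0, hp⟩⟩
  exact le_trans (hM.eigenvalues_nonneg ⟨0, hp⟩) (le_ciSup hbdd ⟨0, hp⟩)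

/-- trace of product of two PSD matrices is nonnegative -/
lemma trace_mul_psd_nonneg {X Y : Mat p} (hX : X.PosSemidef) (hY : Y.PosSemidef) :
    0 ≤ (X * Y).trace := by
  have hS := hX.sqrt_mul_self
  set S := hX.sqrt with hSdef
  have hSpsd : S.PosSemidef := hX.posSemidef_sqrt
  have h1 : X * Y = S * (S * Y) := by rw [← Matrix.mul_assoc, hS]
  rw [h1, Matrix.trace_mul_comm, Matrix.mul_assoc]
  have : (S * Y * S).PosSemidef := by
    have := hY.mul_mul_conjTranspose_same S
    rwa [conjTranspose_eq_transpose_of_trivial, herm_transpose_eq hSpsd.1] at this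
  calc (0:ℝ) ≤ (S * Y * S).trace := psd_trace_nonneg this
    _ = (S * (Y * S)).trace := by rw [Matrix.mul_assoc]


/-- Klein inequality / tangent bound for `log det`. -/
lemma klein {X Y : Mat p} (hX : X.PosDef) (hY : Y.PosDef) :
    Real.log X.det ≤ Real.log Y.det + (Y⁻¹ * X).trace - p := by
  have hYinv : (Y⁻¹).PosDef := hY.inv
  have hSS : hYinv.posSemidef.sqrt * hYinv.posSemidef.sqrt = Y⁻¹ := hYinv.posSemidef.sqrt_mul_self
  set S := hYinv.posSemidef.sqrt with hSdef
  have hSpd : S.PosDef := sqrt_posDef hYinv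
  have hMpd : (S * X * S).PosDef :=
    posDef_conj hX hSpd.1 (isUnit_iff_ne_zero.mpr (ne_of_gt hSpd.det_pos))
  set M := S * X * S with hMdef
  have heigpos : ∀ i, 0 < hMpd.1.eigenvalues i := fun i => hMpd.eigenvalues_pos i
  have hdetM : M.det = ∏ i, hMpd.1.eigenvalues i := by
    have := hMpd.1.det_eq_prod_eigenvalues
    simpa using this
  have hlogdetM : Real.log M.det = ∑ i, Real.log (hMpd.1.eigenvalues i) := by
    rw [hdetM, Real.log_prod]
    exact fun i _ => ne_of_gt (heigpos i)
  have htraceM : M.trace = ∑ i, hMpd.1.eigenvalues i := trace_eq_sum_eig hMpd.1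
  have hkey : Real.log M.det ≤ M.trace - p := by
    rw [hlogdetM, htraceM]
    have : ∀ i ∈ Finset.univ (α := Fin p), Real.log (hMpd.1.eigenvalues i)
        ≤ hMpd.1.eigenvalues i - 1 :=
      fun i _ => Real.log_le_sub_one_of_pos (heigpos i)
    calc ∑ i, Real.log (hMpd.1.eigenvalues i) ≤ ∑ i, (hMpd.1.eigenvalues i - 1) :=
          Finset.sum_le_sum this
      _ = (∑ i, hMpd.1.eigenvalues i) - p := by
          rw [Finset.sum_sub_distrib]
          simp
  have htrM : M.trace = (Y⁻¹ * X).trace := by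
    rw [hMdef, Matrix.trace_mul_cycle, hSS]
  have hdetM' : M.det = (Y.det)⁻¹ * X.det := by
    have h1 : M.det = (S * S).det * X.det := by
      rw [hMdef, Matrix.det_mul, Matrix.det_mul]
      ring_nf
      rw [Matrix.det_mul]
      ring
    rw [h1, hSS, Matrix.det_nonsing_inv, Ring.inverse_eq_inv]
  have hlog : Real.log M.det = Real.log X.det - Real.log Y.det := by
    rw [hdetM', Real.log_mul (inv_ne_zero (ne_of_gt hY.det_pos)) (ne_of_gt hX.det_pos), Real.log_inv]
    ring
  rw [hlog, htrM] at hkey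
  linarith

/-- `p - trace M⁻¹ ≤ log det M` for positive definite `M`. -/
lemma klein' {M : Mat p} (hM : M.PosDef) :
    (p : ℝ) - (M⁻¹).trace ≤ Real.log M.det := by
  have := klein (Matrix.PosDef.one (n := Fin p) (R := ℝ)) hM
  simpa using this


lemma detUnit {M : Mat p} (hM : M.PosDef) : IsUnit M.det :=
  isUnit_iff_ne_zero.mpr (ne_of_gt hM.det_pos)

lemma herm_conj {F X : Mat p} (hF : F.IsHermitian) (hX : X.IsHermitian) :
    (F * X * F).IsHermitian := by
  unfold Matrix.IsHermitian
  rw [conjTranspose_mul, conjTranspose_mul, hF.eq, hX.eq, Matrix.mul_assoc]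

lemma herm_sq {H : Mat p} (hH : H.IsHermitian) : (H * H).IsHermitian := by
  unfold Matrix.IsHermitian
  rw [conjTranspose_mul, hH.eq]

lemma psd_sq {H : Mat p} (hH : H.IsHermitian) : (H * H).PosSemidef := by
  have := Matrix.posSemidef_conjTranspose_mul_self H
  rwa [hH.eq] at this

lemma psd_conj {X S : Mat p} (hX : X.PosSemidef) (hS : S.IsHermitian) :
    (S * X * S).PosSemidef := by
  have := hX.mul_mul_conjTranspose_same S
  rwa [conjTranspose_eq_transpose_of_trivial, herm_transpose_eq hS] at this

lemma mul_sq_posDef {K : Mat p} (hK : K.PosDef) : (K * K).PosDef := by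
  have := posDef_conj (Matrix.PosDef.one (n := Fin p) (R := ℝ)) hK.1 (detUnit hK)
  rwa [Matrix.mul_one] at this

lemma dot_shift (R : Mat p) (x y : Fin p → ℝ) :
    (R *ᵥ x) ⬝ᵥ y = x ⬝ᵥ (Rᵀ *ᵥ y) := by
  rw [dotProduct_comm, Matrix.dotProduct_mulVec y R x, dotProduct_comm]
  congr 1
  rw [← Matrix.vecMul_transpose, Matrix.transpose_transpose]

lemma dot_shift_herm {R : Mat p} (hR : R.IsHermitian) (x y : Fin p → ℝ) :
    x ⬝ᵥ (R *ᵥ y) = (R *ᵥ x) ⬝ᵥ y := by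
  rw [dot_shift, herm_transpose_eq hR]

/-- instance of Choi's inequality: for a unital pair `F*F + H*H = 1`,
`(F X⁻¹ F + H H)⁻¹ ⪯ F X F + H H`. -/
lemma choi {F K H : Mat p} (hF : F.PosDef) (hK : K.PosDef) (hH : H.PosSemidef)
    (hFH : F * F + H * H = 1) :
    PosSemidef ((F * (K * K) * F + H * H) - (F * (K * K)⁻¹ * F + H * H)⁻¹) := by
  have hKKpd : (K * K).PosDef := mul_sq_posDef hK
  have hKinv : (K⁻¹).PosDef := hK.inv
  have hKKinv : ((K * K)⁻¹).PosDef := hKKpd.inv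
  set N := F * (K * K) * F + H * H with hN
  set M := F * (K * K)⁻¹ * F + H * H with hM
  have hNherm : N.IsHermitian :=
    (herm_conj hF.1 hKKpd.1).add (herm_sq hH.1)
  have hMpd : M.PosDef :=
    (posDef_conj hKKinv hF.1 (detUnit hF)).add_posSemidef (psd_sq hH.1)
  have hMiherm : (M⁻¹).IsHermitian := hMpd.inv.1
  refine Matrix.PosSemidef.of_dotProduct_mulVec_nonneg (hNherm.sub hMiherm) (fun v => ?_)
  rw [star_trivial]
  set u := M⁻¹ *ᵥ v with hu
  have hMu : M *ᵥ u = v := by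
    rw [hu, Matrix.mulVec_mulVec, Matrix.mul_nonsing_inv _ (detUnit hMpd), Matrix.one_mulVec]
  have e1 : v ⬝ᵥ (N *ᵥ v) =
      (K *ᵥ (F *ᵥ v)) ⬝ᵥ (K *ᵥ (F *ᵥ v)) + (H *ᵥ v) ⬝ᵥ (H *ᵥ v) := by
    rw [hN, Matrix.add_mulVec, dotProduct_add]
    congr 1
    · simp only [← Matrix.mulVec_mulVec]
      rw [dot_shift_herm hF.1, dot_shift_herm hK.1]
    · rw [← Matrix.mulVec_mulVec, dot_shift_herm hH.1]
  have e2 : u ⬝ᵥ (M *ᵥ u) =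
      (K⁻¹ *ᵥ (F *ᵥ u)) ⬝ᵥ (K⁻¹ *ᵥ (F *ᵥ u)) + (H *ᵥ u) ⬝ᵥ (H *ᵥ u) := by
    rw [hM, Matrix.add_mulVec, dotProduct_add]
    congr 1
    · rw [Matrix.mul_inv_rev]
      simp only [← Matrix.mulVec_mulVec]
      rw [dot_shift_herm hF.1, dot_shift_herm hKinv.1]
    · rw [← Matrix.mulVec_mulVec, dot_shift_herm hH.1]
  have e3 : (K *ᵥ (F *ᵥ v)) ⬝ᵥ (K⁻¹ *ᵥ (F *ᵥ u)) + (H *ᵥ v) ⬝ᵥ (H *ᵥ u) = v ⬝ᵥ u := by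
    have h1 : (K *ᵥ (F *ᵥ v)) ⬝ᵥ (K⁻¹ *ᵥ (F *ᵥ u)) = (F *ᵥ v) ⬝ᵥ (F *ᵥ u) := by
      rw [dot_shift, herm_transpose_eq hK.1, Matrix.mulVec_mulVec,
        Matrix.mul_nonsing_inv _ (detUnit hK), Matrix.one_mulVec]
    have h2 : (F *ᵥ v) ⬝ᵥ (F *ᵥ u) = v ⬝ᵥ ((F * F) *ᵥ u) := by
      rw [dot_shift, herm_transpose_eq hF.1, Matrix.mulVec_mulVec]
    have h3 : (H *ᵥ v) ⬝ᵥ (H *ᵥ u) = v ⬝ᵥ ((H * H) *ᵥ u) := by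
      rw [dot_shift, herm_transpose_eq hH.1, Matrix.mulVec_mulVec]
    rw [h1, h2, h3, ← dotProduct_add, ← Matrix.add_mulVec, hFH, Matrix.one_mulVec]
  have e4 : u ⬝ᵥ (M *ᵥ u) = v ⬝ᵥ u := by rw [hMu, dotProduct_comm]
  have hq1 : (0:ℝ) ≤ (K *ᵥ (F *ᵥ v) - K⁻¹ *ᵥ (F *ᵥ u)) ⬝ᵥ (K *ᵥ (F *ᵥ v) - K⁻¹ *ᵥ (F *ᵥ u)) :=
    Finset.sum_nonneg fun i _ => mul_self_nonneg _
  have hq2 : (0:ℝ) ≤ (H *ᵥ v - H *ᵥ u) ⬝ᵥ (H *ᵥ v - H *ᵥ u) :=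
    Finset.sum_nonneg fun i _ => mul_self_nonneg _
  have hx1 : (K *ᵥ (F *ᵥ v) - K⁻¹ *ᵥ (F *ᵥ u)) ⬝ᵥ (K *ᵥ (F *ᵥ v) - K⁻¹ *ᵥ (F *ᵥ u)) =
      (K *ᵥ (F *ᵥ v)) ⬝ᵥ (K *ᵥ (F *ᵥ v)) - 2 * ((K *ᵥ (F *ᵥ v)) ⬝ᵥ (K⁻¹ *ᵥ (F *ᵥ u)))
        + (K⁻¹ *ᵥ (F *ᵥ u)) ⬝ᵥ (K⁻¹ *ᵥ (F *ᵥ u)) := by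
    rw [dotProduct_sub, sub_dotProduct, sub_dotProduct,
      dotProduct_comm (K⁻¹ *ᵥ (F *ᵥ u)) (K *ᵥ (F *ᵥ v))]
    ring
  have hx2 : (H *ᵥ v - H *ᵥ u) ⬝ᵥ (H *ᵥ v - H *ᵥ u) =
      (H *ᵥ v) ⬝ᵥ (H *ᵥ v) - 2 * ((H *ᵥ v) ⬝ᵥ (H *ᵥ u)) + (H *ᵥ u) ⬝ᵥ (H *ᵥ u) := by
    rw [dotProduct_sub, sub_dotProduct, sub_dotProduct,
      dotProduct_comm (H *ᵥ u) (H *ᵥ v)]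
    ring
  have goal : v ⬝ᵥ ((N - M⁻¹) *ᵥ v) = v ⬝ᵥ (N *ᵥ v) - v ⬝ᵥ u := by
    rw [Matrix.sub_mulVec, dotProduct_sub, hu]
  rw [goal]
  linarith [e1, e2, e3, e4, hq1, hq2, hx1, hx2]

/-- Weinstein–Aronszajn / Sylvester style determinant identity. -/
lemma sylvester {Z W : Mat p} (A : Mat p) (hZ : Z.PosDef) (hW : W.PosDef) :
    (A * Z * Aᵀ + W).det = W.det * (Z.det * (Z⁻¹ + Aᵀ * W⁻¹ * A).det) := by
  have h1 : A * Z * Aᵀ + W = W * (1 + W⁻¹ * (A * Z * Aᵀ)) := by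
    rw [Matrix.mul_add, Matrix.mul_one, ← Matrix.mul_assoc,
      Matrix.mul_nonsing_inv _ (detUnit hW), Matrix.one_mul, add_comm]
  have h2 : W⁻¹ * (A * Z * Aᵀ) = (W⁻¹ * A * Z) * Aᵀ := by
    rw [Matrix.mul_assoc, Matrix.mul_assoc, Matrix.mul_assoc]
  have h3 : (1 + (W⁻¹ * A * Z) * Aᵀ).det = (1 + Aᵀ * (W⁻¹ * A * Z)).det :=
    Matrix.det_one_add_mul_comm _ _
  have h4 : 1 + Aᵀ * (W⁻¹ * A * Z) = (Z⁻¹ + Aᵀ * W⁻¹ * A) * Z := by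
    rw [Matrix.add_mul, Matrix.nonsing_inv_mul _ (detUnit hZ)]
    rw [Matrix.mul_assoc, Matrix.mul_assoc, Matrix.mul_assoc]
  rw [h1, Matrix.det_mul, h2, h3, h4, Matrix.det_mul]
  ring


/-- tangent-line lower bound for the convex function
`X ↦ log det (A X Aᵀ + W) - log det X` at the point `Y`. -/
lemma tangent {X Y W : Mat p} (A : Mat p) (hX : X.PosDef) (hY : Y.PosDef) (hW : W.PosDef) :
    Real.log (A * Y * Aᵀ + W).det - Real.log Y.det
      - (((Y + Y * (Aᵀ * W⁻¹ * A) * Y)⁻¹) * (X - Y)).trace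
    ≤ Real.log (A * X * Aᵀ + W).det - Real.log X.det := by
  -- the matrix B = Aᵀ W⁻¹ A
  set B := Aᵀ * W⁻¹ * A with hBdef
  have hB : B.PosSemidef := by
    have := hW.inv.posSemidef.mul_mul_conjTranspose_same Aᵀ
    rwa [conjTranspose_eq_transpose_of_trivial, Matrix.transpose_transpose] at this
  -- E = sqrt Y
  have hEE : hY.posSemidef.sqrt * hY.posSemidef.sqrt = Y := hY.posSemidef.sqrt_mul_self
  set E := hY.posSemidef.sqrt with hEdef
  have hEpd : E.PosDef := sqrt_posDef hY
  have hEinv : (E⁻¹).PosDef := hEpd.inv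
  have hEcan : E⁻¹ * E = 1 := Matrix.nonsing_inv_mul _ (detUnit hEpd)
  have hEcan' : E * E⁻¹ = 1 := Matrix.mul_nonsing_inv _ (detUnit hEpd)
  -- S = E B E, C1 = 1 + S, C = C1⁻¹
  set S := E * B * E with hSdef
  have hSpsd : S.PosSemidef := psd_conj hB hEpd.1
  set C1 := (1 : Mat p) + S with hC1def
  have hC1pd : C1.PosDef := Matrix.PosDef.one.add_posSemidef hSpsd
  set C := C1⁻¹ with hCdef
  have hCpd : C.PosDef := hC1pd.inv
  have hCcan : C * C1 = 1 := Matrix.nonsing_inv_mul _ (detUnit hC1pd)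
  have hCcan' : C1 * C = 1 := Matrix.mul_nonsing_inv _ (detUnit hC1pd)
  have hCinv : C⁻¹ = C1 := Matrix.nonsing_inv_nonsing_inv _ (detUnit hC1pd)
  -- 1 - C is PSD
  have h1C : ((1 : Mat p) - C).PosSemidef := by
    have hSC : S * C = 1 - C := by
      have h := hCcan'
      rw [hC1def, Matrix.add_mul, Matrix.one_mul] at h
      exact eq_sub_of_add_eq' h
    have key : C * (S + S * S) * C = 1 - C := by
      have h2 : S + S * S = C1 * S := by rw [hC1def, Matrix.add_mul, Matrix.one_mul]
      rw [h2, ← Matrix.mul_assoc, ← Matrix.mul_assoc, hCcan, Matrix.one_mul, hSC]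
    rw [← key]
    exact psd_conj (hSpsd.add (psd_sq hSpsd.1)) hCpd.1
  -- F = sqrt C, H = sqrt (1 - C)
  have hFF : hCpd.posSemidef.sqrt * hCpd.posSemidef.sqrt = C := hCpd.posSemidef.sqrt_mul_self
  set F := hCpd.posSemidef.sqrt with hFdef
  have hFpd : F.PosDef := sqrt_posDef hCpd
  have hHH : h1C.sqrt * h1C.sqrt = 1 - C := h1C.sqrt_mul_self
  set H := h1C.sqrt with hHdef
  have hHpsd : H.PosSemidef := h1C.posSemidef_sqrt
  have hFH : F * F + H * H = 1 := by rw [hFF, hHH]; abel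
  -- X' = E⁻¹ X E⁻¹, K = sqrt X'
  set X' := E⁻¹ * X * E⁻¹ with hX'def
  have hX'pd : X'.PosDef := posDef_conj hX hEinv.1 (detUnit hEinv)
  have hKK : hX'pd.posSemidef.sqrt * hX'pd.posSemidef.sqrt = X' := hX'pd.posSemidef.sqrt_mul_self
  set K := hX'pd.posSemidef.sqrt with hKdef
  have hKpd : K.PosDef := sqrt_posDef hX'pd
  have hKKX : K * K = X' := hKK
  have hX'inv : X'⁻¹ = E * X⁻¹ * E := by
    rw [hX'def, Matrix.mul_inv_rev, Matrix.mul_inv_rev,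
      Matrix.nonsing_inv_nonsing_inv _ (detUnit hEpd), Matrix.mul_assoc]
  -- M and N
  set M := F * (K * K)⁻¹ * F + H * H with hMdef
  set N := F * (K * K) * F + H * H with hNdef
  have hX'invpd : (X'⁻¹).PosDef := hX'pd.inv
  have hMpd : M.PosDef := by
    rw [hMdef, hKKX]
    exact (posDef_conj hX'invpd hFpd.1 (detUnit hFpd)).add_posSemidef (psd_sq hHpsd.1)
  -- Choi : trace M⁻¹ ≤ trace N
  have hchoi : (M⁻¹).trace ≤ N.trace :=
    trace_le_of_psd_sub (choi hFpd hKpd hHpsd hFH)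
  -- Klein : p - trace M⁻¹ ≤ log det M
  have hklein : (p : ℝ) - (M⁻¹).trace ≤ Real.log M.det := klein' hMpd
  -- trace N = trace (C X') + (p - trace C)
  have htrN : N.trace = (C * X').trace + ((p : ℝ) - C.trace) := by
    have h1 : F * (K * K) * F = F * X' * F := by rw [hKKX]
    have h2 : (F * X' * F).trace = (C * X').trace := by
      rw [Matrix.trace_mul_cycle F X' F, hFF]
    have h3 : (H * H).trace = (p : ℝ) - C.trace := by
      rw [hHH, Matrix.trace_sub, Matrix.trace_one]
      simp
    rw [hNdef, Matrix.trace_add, h1, h2, h3]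
  -- the gradient term
  have hGrew : Y + Y * B * Y = E * C1 * E := by
    have h1 : E * C1 * E = E * E + E * S * E := by
      rw [hC1def, Matrix.mul_add, Matrix.mul_one, Matrix.add_mul]
    have h2 : E * S * E = Y * B * Y := by
      rw [hSdef, ← hEE]
      simp only [Matrix.mul_assoc]
    rw [h1, h2, hEE]
  have hGinv : (Y + Y * B * Y)⁻¹ = E⁻¹ * C * E⁻¹ := by
    rw [hGrew, Matrix.mul_inv_rev, Matrix.mul_inv_rev, Matrix.mul_assoc]
  have htrGX : ((Y + Y * B * Y)⁻¹ * X).trace = (C * X').trace := by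
    rw [hGinv]
    have h1 : E⁻¹ * C * E⁻¹ * X = E⁻¹ * (C * E⁻¹ * X) := by
      simp only [Matrix.mul_assoc]
    rw [h1, Matrix.trace_mul_comm E⁻¹ (C * E⁻¹ * X)]
    have h2 : C * E⁻¹ * X * E⁻¹ = C * X' := by
      rw [hX'def]
      simp only [Matrix.mul_assoc]
    rw [h2]
  have htrGY : ((Y + Y * B * Y)⁻¹ * Y).trace = C.trace := by
    rw [hGinv]
    have h1 : E⁻¹ * C * E⁻¹ * Y = E⁻¹ * (C * E) := by
      rw [← hEE]
      simp only [Matrix.mul_assoc]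
      rw [← Matrix.mul_assoc E⁻¹ E E, hEcan, Matrix.one_mul]
    rw [h1, Matrix.trace_mul_comm E⁻¹ (C * E), Matrix.mul_assoc, hEcan', Matrix.mul_one]
  have htrG : ((Y + Y * B * Y)⁻¹ * (X - Y)).trace = (C * X').trace - C.trace := by
    rw [Matrix.mul_sub, Matrix.trace_sub, htrGX, htrGY]
  -- determinant identities
  have hXBpd : (X⁻¹ + B).PosDef := hX.inv.add_posSemidef hB
  have hYBpd : (Y⁻¹ + B).PosDef := hY.inv.add_posSemidef hB
  have hEYE : E * Y⁻¹ * E = 1 := by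
    rw [← hEE, Matrix.mul_inv_rev, ← Matrix.mul_assoc, Matrix.mul_assoc (E * E⁻¹),
      hEcan', hEcan, Matrix.mul_one]
  have hFSF : F * S * F = 1 - C := by
    have h1 : F * C1 * F = F * F + F * S * F := by
      rw [hC1def, Matrix.mul_add, Matrix.mul_one, Matrix.add_mul]
    have h2 : F * C1 * F = 1 := by
      rw [← hCinv, ← hFF, Matrix.mul_inv_rev]
      have h3 : F * (F⁻¹ * F⁻¹) * F = (F * F⁻¹) * (F⁻¹ * F) := by
        simp only [Matrix.mul_assoc]
      rw [h3, Matrix.mul_nonsing_inv _ (detUnit hFpd),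
        Matrix.nonsing_inv_mul _ (detUnit hFpd), Matrix.mul_one]
    rw [h2] at h1
    rw [← hFF]
    exact eq_sub_of_add_eq' h1.symm
  have hMeq : M = F * (E * (X⁻¹ + B) * E) * F := by
    have h1 : E * (X⁻¹ + B) * E = X'⁻¹ + S := by
      rw [Matrix.mul_add, Matrix.add_mul, hX'inv, hSdef]
    rw [h1, hMdef, hKKX, hX'inv]
    rw [Matrix.mul_add, Matrix.add_mul, ← hX'inv, hHH, hFSF]
  have hMdet : M.det = C.det * (Y.det * (X⁻¹ + B).det) := by
    rw [hMeq, Matrix.det_mul, Matrix.det_mul, Matrix.det_mul, Matrix.det_mul,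
      ← hFF, ← hEE, Matrix.det_mul, Matrix.det_mul]
    ring
  have hC1eq : E * (Y⁻¹ + B) * E = C1 := by
    rw [Matrix.mul_add, Matrix.add_mul, hEYE, hC1def, hSdef]
  have hC1det : C1.det = Y.det * (Y⁻¹ + B).det := by
    rw [← hC1eq, Matrix.det_mul, Matrix.det_mul, ← hEE, Matrix.det_mul]
    ring
  have hCdet : C.det = (C1.det)⁻¹ := by
    rw [hCdef, Matrix.det_nonsing_inv, Ring.inverse_eq_inv]
  -- Sylvester for X and Y
  have hsylX : (A * X * Aᵀ + W).det = W.det * (X.det * (X⁻¹ + B).det) := sylvester A hX hW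
  have hsylY : (A * Y * Aᵀ + W).det = W.det * (Y.det * (Y⁻¹ + B).det) := sylvester A hY hW
  -- take logs
  have lW := Real.log (W.det)
  have hlogX : Real.log (A * X * Aᵀ + W).det
      = Real.log W.det + Real.log X.det + Real.log (X⁻¹ + B).det := by
    rw [hsylX, Real.log_mul (ne_of_gt hW.det_pos)
        (mul_ne_zero (ne_of_gt hX.det_pos) (ne_of_gt hXBpd.det_pos)),
      Real.log_mul (ne_of_gt hX.det_pos) (ne_of_gt hXBpd.det_pos)]
    ring
  have hlogY : Real.log (A * Y * Aᵀ + W).det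
      = Real.log W.det + Real.log Y.det + Real.log (Y⁻¹ + B).det := by
    rw [hsylY, Real.log_mul (ne_of_gt hW.det_pos)
        (mul_ne_zero (ne_of_gt hY.det_pos) (ne_of_gt hYBpd.det_pos)),
      Real.log_mul (ne_of_gt hY.det_pos) (ne_of_gt hYBpd.det_pos)]
    ring
  have hlogM : Real.log M.det
      = Real.log C.det + Real.log Y.det + Real.log (X⁻¹ + B).det := by
    rw [hMdet, Real.log_mul (ne_of_gt hCpd.det_pos)
        (mul_ne_zero (ne_of_gt hY.det_pos) (ne_of_gt hXBpd.det_pos)),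
      Real.log_mul (ne_of_gt hY.det_pos) (ne_of_gt hXBpd.det_pos)]
    ring
  have hlogC : Real.log C.det = - (Real.log Y.det + Real.log (Y⁻¹ + B).det) := by
    rw [hCdet, Real.log_inv, hC1det,
      Real.log_mul (ne_of_gt hY.det_pos) (ne_of_gt hYBpd.det_pos)]
  rw [hlogX, hlogY, htrG]
  linarith [hklein, hchoi, htrN, hlogM, hlogC]


lemma pd_trace_pos (hp : 1 ≤ p) {M : Mat p} (hM : M.PosDef) : 0 < M.trace := by
  have : Nonempty (Fin p) := ⟨⟨0, hp⟩⟩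
  rw [trace_eq_sum_eig hM.1]
  exact Finset.sum_pos (fun i _ => hM.eigenvalues_pos i) Finset.univ_nonempty

lemma sum_range_posDef (P : ℕ → Mat p) {m : ℕ} (hm : 0 < m)
    (hP : ∀ t < m, (P t).PosDef) : (∑ t ∈ Finset.range m, P t).PosDef := by
  induction m with
  | zero => omega
  | succ k ih =>
    rcases Nat.eq_zero_or_pos k with hk | hk
    · subst hk
      simpa using hP 0 (by omega)
    · rw [Finset.sum_range_succ]
      exact (ih hk (fun t ht => hP t (by omega))).add_posSemidef
        (hP k (by omega)).posSemidef

/-- Jensen's inequality for the convex function `X ↦ log det (A X Aᵀ + W) - log det X`. -/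
lemma jensen {m : ℕ} (W A : Mat p) (hW : W.PosDef) (P : ℕ → Mat p)
    (hP : ∀ t < m, (P t).PosDef) {Pb : Mat p} (hPb : Pb.PosDef)
    (hPbdef : (m : ℝ) • Pb = ∑ t ∈ Finset.range m, P t) :
    (m : ℝ) * (Real.log (A * Pb * Aᵀ + W).det - Real.log Pb.det)
      ≤ ∑ t ∈ Finset.range m, (Real.log (A * P t * Aᵀ + W).det - Real.log (P t).det) := by
  set G := (Pb + Pb * (Aᵀ * W⁻¹ * A) * Pb)⁻¹ with hG
  have key : ∀ t ∈ Finset.range m,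
      (Real.log (A * Pb * Aᵀ + W).det - Real.log Pb.det) - (G * (P t - Pb)).trace
        ≤ Real.log (A * P t * Aᵀ + W).det - Real.log (P t).det :=
    fun t ht => tangent A (hP t (Finset.mem_range.mp ht)) hPb hW
  have hsum := Finset.sum_le_sum key
  have h1 : ∑ t ∈ Finset.range m, (G * (P t - Pb)).trace = 0 := by
    have h2 : ∑ t ∈ Finset.range m, (G * (P t - Pb)) =
        G * ((∑ t ∈ Finset.range m, P t) - (m : ℝ) • Pb) := by
      rw [← Matrix.mul_sum, Finset.sum_sub_distrib, Finset.sum_const, Finset.card_range,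
        Eq.symm (Nat.cast_smul_eq_nsmul ℝ _ _)]
    rw [← Matrix.trace_sum, h2, hPbdef, sub_self, Matrix.mul_zero, Matrix.trace_zero]
  have h3 : ∑ t ∈ Finset.range m,
      ((Real.log (A * Pb * Aᵀ + W).det - Real.log Pb.det) - (G * (P t - Pb)).trace)
      = (m : ℝ) * (Real.log (A * Pb * Aᵀ + W).det - Real.log Pb.det) := by
    rw [Finset.sum_sub_distrib, h1, Finset.sum_const, Finset.card_range, nsmul_eq_mul, sub_zero]
  rw [h3] at hsum
  exact hsum

lemma psd_transpose_conj {P : Mat p} (hP : P.PosSemidef) (A : Mat p) :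
    (A * P * Aᵀ).PosSemidef := by
  have := hP.mul_mul_conjTranspose_same A
  rwa [conjTranspose_eq_transpose_of_trivial] at this

lemma psd_AtA (A : Mat p) : (Aᵀ * A).PosSemidef := by
  have := Matrix.posSemidef_conjTranspose_mul_self A
  rwa [conjTranspose_eq_transpose_of_trivial] at this

lemma psd_AAt (A : Mat p) : (A * Aᵀ).PosSemidef := by
  have := Matrix.posSemidef_self_mul_conjTranspose A
  rwa [conjTranspose_eq_transpose_of_trivial] at this

/-- `Aᵀ A ⪯ λmax(A Aᵀ) • 1`. -/
lemma psd_AtA_le (A : Mat p) :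
    (((⨆ i, (psd_AAt A).1.eigenvalues i) • (1 : Mat p)) - Aᵀ * A).PosSemidef := by
  set mA := ⨆ i, (psd_AAt A).1.eigenvalues i with hmA
  have hAAt := psd_eigMax_smul_sub (psd_AAt A).1
  have hm0 : ∀ w : Fin p → ℝ, w ⬝ᵥ ((A * Aᵀ) *ᵥ w) ≤ mA * (w ⬝ᵥ w) := by
    intro w
    have := hAAt.dotProduct_mulVec_nonneg w
    rw [star_trivial, Matrix.sub_mulVec, dotProduct_sub,
      Matrix.smul_mulVec, Matrix.one_mulVec, dotProduct_smul] at this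
    simpa [smul_eq_mul] using this
  have hmnonneg : 0 ≤ mA := by
    rcases Nat.eq_zero_or_pos p with hp0 | hp0
    · subst hp0
      rw [hmA, Real.iSup_of_isEmpty]
    · exact eigMax_nonneg hp0 (psd_AAt A)
  refine Matrix.PosSemidef.of_dotProduct_mulVec_nonneg ?_ (fun v => ?_)
  · unfold Matrix.IsHermitian
    rw [conjTranspose_sub, conjTranspose_smul, conjTranspose_one, (psd_AtA A).1.eq]
    simp
  · rw [star_trivial, Matrix.sub_mulVec, dotProduct_sub,
      Matrix.smul_mulVec, Matrix.one_mulVec, dotProduct_smul]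
    have ha : v ⬝ᵥ ((Aᵀ * A) *ᵥ v) = (A *ᵥ v) ⬝ᵥ (A *ᵥ v) := by
      rw [← Matrix.mulVec_mulVec]
      exact (dot_shift A v (A *ᵥ v)).symm
    set a := (A *ᵥ v) ⬝ᵥ (A *ᵥ v) with hadef
    have ha0 : 0 ≤ a := Finset.sum_nonneg fun i _ => mul_self_nonneg _
    have hv0 : 0 ≤ v ⬝ᵥ v := Finset.sum_nonneg fun i _ => mul_self_nonneg _
    have hb := hm0 (A *ᵥ v)
    -- (Aᵀ (A v)) ⬝ (Aᵀ (A v)) ≤ mA * a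
    have hb' : (Aᵀ *ᵥ (A *ᵥ v)) ⬝ᵥ (Aᵀ *ᵥ (A *ᵥ v)) ≤ mA * a := by
      have h2 : (A *ᵥ v) ⬝ᵥ ((A * Aᵀ) *ᵥ (A *ᵥ v))
          = (Aᵀ *ᵥ (A *ᵥ v)) ⬝ᵥ (Aᵀ *ᵥ (A *ᵥ v)) := by
        have h3 := dot_shift Aᵀ (A *ᵥ v) (Aᵀ *ᵥ (A *ᵥ v))
        rw [Matrix.transpose_transpose] at h3
        rw [← Matrix.mulVec_mulVec]
        exact h3.symm
      rw [← h2]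
      exact hb
    -- a = v ⬝ (Aᵀ (A v))
    have ha2 : a = v ⬝ᵥ (Aᵀ *ᵥ (A *ᵥ v)) := dot_shift A v (A *ᵥ v)
    -- Cauchy-Schwarz
    have hcs : (v ⬝ᵥ (Aᵀ *ᵥ (A *ᵥ v))) ^ 2 ≤ (v ⬝ᵥ v) *
        ((Aᵀ *ᵥ (A *ᵥ v)) ⬝ᵥ (Aᵀ *ᵥ (A *ᵥ v))) := by
      have := Finset.sum_mul_sq_le_sq_mul_sq (Finset.univ (α := Fin p))
        v (Aᵀ *ᵥ (A *ᵥ v))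
      simpa [dotProduct, pow_two] using this
    rw [sub_nonneg, ha]
    rw [← ha2] at hcs
    rcases eq_or_lt_of_le ha0 with h | h
    · rw [← h]
      exact mul_nonneg hmnonneg hv0
    · have h5 : (v ⬝ᵥ v) * ((Aᵀ *ᵥ (A *ᵥ v)) ⬝ᵥ (Aᵀ *ᵥ (A *ᵥ v)))
          ≤ (v ⬝ᵥ v) * (mA * a) := mul_le_mul_of_nonneg_left hb' hv0
      have h6 : a * a ≤ (mA * (v ⬝ᵥ v)) * a := by nlinarith [hcs, h5]
      exact le_of_mul_le_mul_right h6 h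

/-- `trace (A P Aᵀ) ≤ λmax(A Aᵀ) * trace P` for `P ⪰ 0`. -/
lemma trace_conj_le {P : Mat p} (hP : P.PosSemidef) (A : Mat p) :
    (A * P * Aᵀ).trace ≤ (⨆ i, (psd_AAt A).1.eigenvalues i) * P.trace := by
  set mA := ⨆ i, (psd_AAt A).1.eigenvalues i with hmA
  have h0 : 0 ≤ (P * (mA • (1 : Mat p) - Aᵀ * A)).trace :=
    trace_mul_psd_nonneg hP (psd_AtA_le A)
  have h1 : (P * (mA • (1 : Mat p) - Aᵀ * A)).trace
      = mA * P.trace - (P * (Aᵀ * A)).trace := by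
    rw [Matrix.mul_sub, Matrix.trace_sub, Matrix.mul_smul, Matrix.mul_one, Matrix.trace_smul]
    simp [smul_eq_mul]
  have h2 : (A * P * Aᵀ).trace = (P * (Aᵀ * A)).trace := by
    rw [Matrix.trace_mul_comm (A * P) Aᵀ, ← Matrix.mul_assoc,
      Matrix.trace_mul_comm (Aᵀ * A) P]
  rw [h2]
  linarith


end SRD

open SRD

/-- The finite-horizon Gaussian SRD value `F_n(D)` is bounded below by the stationary
relaxation `f(D; ε_n, δ_n)` (Lemma 4 of the paper), with infima taken in the extended
reals. -/
theorem stmt_12 {p : ℕ} (hp : 1 ≤ p) (n : ℕ)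
    (A Sw Sx0 : Matrix (Fin p) (Fin p) ℝ) (hSw : Sw.PosDef) (hSx0 : Sx0.PosDef)
    (D : ℝ) (hD : D > 0)
    (δ ε : ℝ)
    (hδ : δ = eigMax Sx0 hSx0.1 / ((n : ℝ) + 1))
    (hε : ε = ((n : ℝ) + 1)⁻¹ *
      (((p : ℝ) / 2) *
          Real.log ((eigMax (A * Aᵀ) (isHermitian_mul_transpose_self_real A) * D + Sw.trace) /
            (p : ℝ)) -
        (1 / 2) * Real.log Sx0.det)) :
    sInf {x : EReal | ∃ P : ℕ → Matrix (Fin p) (Fin p) ℝ,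
        (∀ t ≤ n, (P t).PosDef) ∧ (Sx0 - P 0).PosSemidef ∧
        (∀ t, 1 ≤ t → t ≤ n → (A * P (t - 1) * Aᵀ + Sw - P t).PosSemidef) ∧
        (∀ t ≤ n, (P t).trace ≤ D) ∧
        x = (((n : ℝ) + 1)⁻¹ *
          ((1 / 2) * Real.log Sx0.det - (1 / 2) * Real.log (P 0).det +
            ∑ t ∈ Finset.Icc 1 n,
              ((1 / 2) * Real.log (A * P (t - 1) * Aᵀ + Sw).det -
                (1 / 2) * Real.log (P t).det)) : ℝ)} ≥
      sInf {x : EReal | ∃ P : Matrix (Fin p) (Fin p) ℝ, P.PosDef ∧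
        (A * P * Aᵀ + Sw + δ • (1 : Matrix (Fin p) (Fin p) ℝ) - P).PosSemidef ∧
        P.trace ≤ D ∧
        x = ((1 / 2) * Real.log (A * P * Aᵀ + Sw).det - (1 / 2) * Real.log P.det - ε : ℝ)} := by
  refine le_sInf ?_
  rintro x ⟨P, hPD, hP0, hstep, htr, hxval⟩
  -- basic positivity
  have hm1 : (0 : ℝ) < (n : ℝ) + 1 := by positivity
  have hmne : ((n : ℝ) + 1) ≠ 0 := ne_of_gt hm1
  set c : ℝ := ((n : ℝ) + 1)⁻¹ with hcdef
  have hc0 : 0 < c := inv_pos.mpr hm1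
  have hcmul : c * ((n : ℝ) + 1) = 1 := inv_mul_cancel₀ hmne
  -- the average matrix
  set R : Matrix (Fin p) (Fin p) ℝ := ∑ t ∈ Finset.range (n + 1), P t with hRdef
  have hRpd : R.PosDef :=
    sum_range_posDef P (by omega) (fun t ht => hPD t (by omega))
  set Pb : Matrix (Fin p) (Fin p) ℝ := c • R with hPbdef0
  have hPbpd : Pb.PosDef := posDef_smul hRpd hc0
  have hPbNat : (((n + 1 : ℕ)) : ℝ) • Pb = ∑ t ∈ Finset.range (n + 1), P t := by
    rw [hPbdef0, smul_smul, ← hRdef]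
    push_cast
    rw [mul_inv_cancel₀ hmne, one_smul]
  -- trace bound for Pb
  have htrPb : Pb.trace ≤ D := by
    have h1 : R.trace ≤ ((n : ℝ) + 1) * D := by
      rw [hRdef, Matrix.trace_sum]
      calc ∑ t ∈ Finset.range (n + 1), (P t).trace
          ≤ ∑ t ∈ Finset.range (n + 1), D :=
            Finset.sum_le_sum (fun t ht => htr t (by
              simp only [Finset.mem_range] at ht; omega))
        _ = ((n : ℝ) + 1) * D := by
            rw [Finset.sum_const, Finset.card_range, nsmul_eq_mul]
            push_cast
            ring
    rw [hPbdef0, Matrix.trace_smul, smul_eq_mul]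
    calc c * R.trace ≤ c * (((n : ℝ) + 1) * D) :=
          mul_le_mul_of_nonneg_left h1 (le_of_lt hc0)
      _ = D := by rw [← mul_assoc, hcmul, one_mul]
  -- feasibility of Pb
  set lam : ℝ := eigMax Sx0 hSx0.1 with hlamdef
  have hlam_eq : lam = ⨆ i, hSx0.1.eigenvalues i := rfl
  have hcl : ∀ k, k ≤ n → PosSemidef
      (lam • (1 : Matrix (Fin p) (Fin p) ℝ) + A * (∑ t ∈ Finset.range k, P t) * Aᵀ
        + (k : ℝ) • Sw - ∑ t ∈ Finset.range (k + 1), P t) := by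
    intro k
    induction k with
    | zero =>
      intro _
      have h1 := psd_eigMax_smul_sub hSx0.1
      rw [← hlam_eq] at h1
      have h2 := h1.add hP0
      have heq : (lam • (1 : Matrix (Fin p) (Fin p) ℝ) - Sx0) + (Sx0 - P 0)
          = lam • (1 : Matrix (Fin p) (Fin p) ℝ) + A * (∑ t ∈ Finset.range 0, P t) * Aᵀ
            + ((0 : ℕ) : ℝ) • Sw - ∑ t ∈ Finset.range 1, P t := by
        rw [Finset.range_zero, Finset.sum_empty, Finset.sum_range_one,
          Matrix.mul_zero, Matrix.zero_mul]
        push_cast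
        rw [zero_smul]
        abel
      rw [heq] at h2
      exact h2
    | succ k ih =>
      intro hk1
      have h1 := ih (by omega)
      have h2 := hstep (k + 1) (by omega) hk1
      have h21 : k + 1 - 1 = k := by omega
      rw [h21] at h2
      have h3 := h1.add h2
      have hs1 : ∑ t ∈ Finset.range (k + 1), P t = (∑ t ∈ Finset.range k, P t) + P k :=
        Finset.sum_range_succ P k
      have hs2 : ∑ t ∈ Finset.range (k + 2), P t
          = (∑ t ∈ Finset.range (k + 1), P t) + P (k + 1) := Finset.sum_range_succ P (k + 1)
      have heq : (lam • (1 : Matrix (Fin p) (Fin p) ℝ) + A * (∑ t ∈ Finset.range k, P t) * Aᵀ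
            + (k : ℝ) • Sw - ∑ t ∈ Finset.range (k + 1), P t)
          + (A * P k * Aᵀ + Sw - P (k + 1))
          = lam • (1 : Matrix (Fin p) (Fin p) ℝ) + A * (∑ t ∈ Finset.range (k + 1), P t) * Aᵀ
            + (((k + 1 : ℕ)) : ℝ) • Sw - ∑ t ∈ Finset.range (k + 2), P t := by
        rw [hs2, hs1, Matrix.mul_add, Matrix.add_mul]
        push_cast
        rw [add_smul, one_smul]
        abel
      rw [heq] at h3
      exact h3
  have hQnpsd : (A * P n * Aᵀ + Sw).PosSemidef :=
    (psd_transpose_conj (hPD n le_rfl).posSemidef A).add hSw.posSemidef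
  have hT := (hcl n le_rfl).add hQnpsd
  have hTeq : (lam • (1 : Matrix (Fin p) (Fin p) ℝ) + A * (∑ t ∈ Finset.range n, P t) * Aᵀ
        + (n : ℝ) • Sw - ∑ t ∈ Finset.range (n + 1), P t) + (A * P n * Aᵀ + Sw)
      = lam • (1 : Matrix (Fin p) (Fin p) ℝ) + A * R * Aᵀ + ((n : ℝ) + 1) • Sw - R := by
    rw [hRdef, Finset.sum_range_succ P n, Matrix.mul_add, Matrix.add_mul,
      add_smul, one_smul]
    abel
  rw [hTeq] at hT
  have hfeas : (A * Pb * Aᵀ + Sw + δ • (1 : Matrix (Fin p) (Fin p) ℝ) - Pb).PosSemidef := by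
    have h4 := psd_smul hT (le_of_lt hc0)
    have heq2 : c • (lam • (1 : Matrix (Fin p) (Fin p) ℝ) + A * R * Aᵀ + ((n : ℝ) + 1) • Sw - R)
        = A * Pb * Aᵀ + Sw + δ • (1 : Matrix (Fin p) (Fin p) ℝ) - Pb := by
      have e1 : c • (lam • (1 : Matrix (Fin p) (Fin p) ℝ)) = δ • 1 := by
        rw [smul_smul, hδ]
        congr 1
        rw [hcdef, div_eq_mul_inv, mul_comm]
      have e2 : c • (A * R * Aᵀ) = A * Pb * Aᵀ := by
        rw [hPbdef0, Matrix.mul_smul, Matrix.smul_mul]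
      have e3 : c • (((n : ℝ) + 1) • Sw) = Sw := by
        rw [smul_smul, hcdef, inv_mul_cancel₀ hmne, one_smul]
      rw [smul_sub, smul_add, smul_add, e1, e2, e3, ← hPbdef0]
      abel
    rw [heq2] at h4
    exact h4
  -- value comparison
  set lam2 : ℝ := eigMax (A * Aᵀ) (isHermitian_mul_transpose_self_real A) with hlam2def
  have hlam2_eq : lam2 = ⨆ i, (psd_AAt A).1.eigenvalues i := rfl
  have hlam2nn : 0 ≤ lam2 := by rw [hlam2_eq]; exact eigMax_nonneg hp (psd_AAt A)
  set cst : ℝ := (lam2 * D + Sw.trace) / (p : ℝ) with hcstdef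
  have hp0 : (0 : ℝ) < (p : ℝ) := by exact_mod_cast hp
  have hSwtr : 0 < Sw.trace := pd_trace_pos hp hSw
  have hcstpos : 0 < cst := by
    rw [hcstdef]
    have : 0 < lam2 * D + Sw.trace := by nlinarith
    positivity
  have htrQn : (A * P n * Aᵀ + Sw).trace ≤ (p : ℝ) * cst := by
    have h1 : (A * P n * Aᵀ).trace ≤ lam2 * (P n).trace := by
      rw [hlam2_eq]
      exact trace_conj_le (hPD n le_rfl).posSemidef A
    have h2 : lam2 * (P n).trace ≤ lam2 * D :=
      mul_le_mul_of_nonneg_left (htr n le_rfl) hlam2nn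
    have h3 : (p : ℝ) * cst = lam2 * D + Sw.trace := by
      rw [hcstdef]
      field_simp
    rw [Matrix.trace_add, h3]
    linarith
  have hQnpd : (A * P n * Aᵀ + Sw).PosDef :=
    Matrix.PosDef.posSemidef_add (psd_transpose_conj (hPD n le_rfl).posSemidef A) hSw
  have hK : Real.log (A * P n * Aᵀ + Sw).det ≤ (p : ℝ) * Real.log cst := by
    have hkl := klein hQnpd (posDef_smul_one hcstpos)
    have hdet1 : (cst • (1 : Matrix (Fin p) (Fin p) ℝ)).det = cst ^ p := by
      rw [Matrix.det_smul, Matrix.det_one, mul_one, Fintype.card_fin]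
    have hinv1 : (cst • (1 : Matrix (Fin p) (Fin p) ℝ))⁻¹ = cst⁻¹ • 1 := by
      apply Matrix.inv_eq_right_inv
      rw [Matrix.smul_mul, Matrix.mul_smul, Matrix.one_mul, smul_smul,
        mul_inv_cancel₀ (ne_of_gt hcstpos), one_smul]
    have htr1 : ((cst • (1 : Matrix (Fin p) (Fin p) ℝ))⁻¹ * (A * P n * Aᵀ + Sw)).trace
        = cst⁻¹ * (A * P n * Aᵀ + Sw).trace := by
      rw [hinv1, Matrix.smul_mul, Matrix.one_mul, Matrix.trace_smul, smul_eq_mul]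
    have hlogdet1 : Real.log (cst • (1 : Matrix (Fin p) (Fin p) ℝ)).det
        = (p : ℝ) * Real.log cst := by
      rw [hdet1, Real.log_pow]
    have hbd : cst⁻¹ * (A * P n * Aᵀ + Sw).trace ≤ (p : ℝ) := by
      calc cst⁻¹ * (A * P n * Aᵀ + Sw).trace ≤ cst⁻¹ * ((p : ℝ) * cst) :=
            mul_le_mul_of_nonneg_left htrQn (inv_nonneg.mpr (le_of_lt hcstpos))
        _ = (p : ℝ) := by field_simp
    rw [hlogdet1, htr1] at hkl
    linarith
  -- Jensen
  have hjen := jensen Sw A hSw P (fun t ht => hPD t (by omega)) hPbpd hPbNat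
  have hjen2 : ((n : ℝ) + 1) * (Real.log (A * Pb * Aᵀ + Sw).det - Real.log Pb.det)
      ≤ (∑ t ∈ Finset.range (n + 1), Real.log (A * P t * Aᵀ + Sw).det)
        - (∑ t ∈ Finset.range (n + 1), Real.log (P t).det) := by
    have hcast : (((n + 1 : ℕ)) : ℝ) = (n : ℝ) + 1 := by push_cast; ring
    rw [← hcast, ← Finset.sum_sub_distrib]
    exact hjen
  -- sum identities
  have hre : ∀ i : ℕ, 1 + i - 1 = i := fun i => by omega
  have F3 : ∑ t ∈ Finset.range (n + 1), Real.log (A * P t * Aᵀ + Sw).det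
      = (∑ t ∈ Finset.range n, Real.log (A * P t * Aᵀ + Sw).det)
        + Real.log (A * P n * Aᵀ + Sw).det :=
    Finset.sum_range_succ _ n
  have F4 : ∑ t ∈ Finset.Icc 1 n, ((1 / 2) * Real.log (A * P (t - 1) * Aᵀ + Sw).det
        - (1 / 2) * Real.log (P t).det)
      = (1 / 2) * (∑ t ∈ Finset.range n, Real.log (A * P t * Aᵀ + Sw).det)
        - (1 / 2) * (∑ t ∈ Finset.range (n + 1), Real.log (P t).det)
        + (1 / 2) * Real.log (P 0).det := by
    rw [Finset.sum_sub_distrib]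
    have i1 : ∑ t ∈ Finset.Icc 1 n, (1 / 2) * Real.log (A * P (t - 1) * Aᵀ + Sw).det
        = (1 / 2) * ∑ t ∈ Finset.range n, Real.log (A * P t * Aᵀ + Sw).det := by
      rw [Finset.mul_sum, ← Finset.Ico_add_one_right_eq_Icc, Finset.sum_Ico_eq_sum_range, Nat.add_sub_cancel]
      exact Finset.sum_congr rfl (fun i _ => by rw [hre i])
    have i2 : ∑ t ∈ Finset.Icc 1 n, (1 / 2) * Real.log (P t).det
        = (1 / 2) * (∑ t ∈ Finset.range (n + 1), Real.log (P t).det)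
          - (1 / 2) * Real.log (P 0).det := by
      have h1 : ∑ t ∈ Finset.range (n + 1), Real.log (P t).det
          = (∑ i ∈ Finset.range n, Real.log (P (i + 1)).det) + Real.log (P 0).det :=
        Finset.sum_range_succ' _ n
      have h2 : ∑ t ∈ Finset.Icc 1 n, (1 / 2) * Real.log (P t).det
          = (1 / 2) * ∑ i ∈ Finset.range n, Real.log (P (i + 1)).det := by
        rw [Finset.mul_sum, ← Finset.Ico_add_one_right_eq_Icc, Finset.sum_Ico_eq_sum_range, Nat.add_sub_cancel]
        exact Finset.sum_congr rfl (fun i _ => by rw [add_comm 1 i])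
      rw [h2, h1]
      ring
    rw [i1, i2]
    ring
  have heps : ((n : ℝ) + 1) * ε
      = (p : ℝ) / 2 * Real.log cst - (1 / 2) * Real.log Sx0.det := by
    rw [hε, ← mul_assoc, mul_inv_cancel₀ hmne, one_mul]
  have hcc : ∀ z : ℝ, ((n : ℝ) + 1) * (c * z) = z := fun z => by
    rw [← mul_assoc, mul_comm ((n : ℝ) + 1) c, hcmul, one_mul]
  -- the scalar inequality
  have hyr : (1 / 2) * Real.log (A * Pb * Aᵀ + Sw).det - (1 / 2) * Real.log Pb.det - ε
      ≤ c * ((1 / 2) * Real.log Sx0.det - (1 / 2) * Real.log (P 0).det +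
          ∑ t ∈ Finset.Icc 1 n, ((1 / 2) * Real.log (A * P (t - 1) * Aᵀ + Sw).det -
            (1 / 2) * Real.log (P t).det)) := by
    apply le_of_mul_le_mul_left _ hm1
    rw [hcc]
    rw [F4]
    nlinarith [hjen2, hK, F3, heps]
  -- conclude in EReal
  have hmem : (((1 / 2) * Real.log (A * Pb * Aᵀ + Sw).det - (1 / 2) * Real.log Pb.det - ε : ℝ)
      : EReal) ∈ {x : EReal | ∃ P : Matrix (Fin p) (Fin p) ℝ, P.PosDef ∧
      (A * P * Aᵀ + Sw + δ • (1 : Matrix (Fin p) (Fin p) ℝ) - P).PosSemidef ∧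
      P.trace ≤ D ∧
      x = ((1 / 2) * Real.log (A * P * Aᵀ + Sw).det - (1 / 2) * Real.log P.det - ε : ℝ)} :=
    ⟨Pb, hPbpd, hfeas, htrPb, rfl⟩
  refine le_trans (sInf_le hmem) ?_
  rw [hxval]
  exact_mod_cast hyr
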